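/- Let 0 < p < 1 be fixed and let G = G(n,p) be an Erdős–Rényi random graph. Then, with probability tending to 1 as n → ∞, for every vertex v, the distribution μ₁ of the simple random walk started at v after one step satisfies ‖μ₁ − π‖_{ℓ²} ≤ C_p/√n, where π is the stationary distribution and C_p depends only on p. -/

import Mathlib

open MeasureTheory Filter Matrix

noncomputable section

/-- The simple graph on `Fin n` determined by a Boolean labelling of unordered pairs of
vertices: `u` and `w` are adjacent iff `u ≠ w` and the pair `{u, w}` is labelled `true`. -/
def graphOf (n : ℕ) (ω : Sym2 (Fin n) → Bool) : SimpleGraph (Fin n) where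
  Adj u w := u ≠ w ∧ ω s(u, w) = true
  symm := by
    refine ⟨fun u w h => ?_⟩
    refine ⟨h.1.symm, ?_⟩
    rw [Sym2.eq_swap]
    exact h.2
  loopless := by
    refine ⟨fun u h => ?_⟩
    exact h.1 rfl

instance (n : ℕ) (ω : Sym2 (Fin n) → Bool) : DecidableRel (graphOf n ω).Adj :=
  fun _ _ => instDecidableAnd

/-- Transition matrix of the simple random walk on a finite graph: from `u`, move to a
uniformly random neighbor of `u`. -/
def transM {V : Type*} [Fintype V] [DecidableEq V] (G : SimpleGraph V) [DecidableRel G.Adj] :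
    Matrix V V ℝ :=
  Matrix.of fun u w => if G.Adj u w then ((G.degree u : ℝ))⁻¹ else 0

/-- Transition matrix with all transitions into `v` removed (the walk killed at `v`). -/
def killedM {V : Type*} [Fintype V] [DecidableEq V] (G : SimpleGraph V) [DecidableRel G.Adj]
    (v : V) : Matrix V V ℝ :=
  Matrix.of fun u w => if w = v then 0 else transM G u w

/-- Expected hitting time `H_{wv}` of `v` for the simple random walk started at `w`,
defined via `H_{wv} = Σ_{t ≥ 0} P(T > t)` where `T` is the first hitting time of `v`;
the survival probability `P(T > t)` equals `((killedM G v)^t 𝟙)_w`.  By convention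
`H_{vv} = 0`. -/
def hit {V : Type*} [Fintype V] [DecidableEq V] (G : SimpleGraph V) [DecidableRel G.Adj]
    (w v : V) : ℝ :=
  if w = v then 0 else ∑' t : ℕ, ((killedM G v ^ t) *ᵥ fun _ => (1 : ℝ)) w

/-- The stationary distribution `π(w) = deg(w) / (2|E|)` of the simple random walk. -/
def statDist {V : Type*} [Fintype V] [DecidableEq V] (G : SimpleGraph V) [DecidableRel G.Adj]
    (w : V) : ℝ :=
  (G.degree w : ℝ) / (2 * (G.edgeFinset.card : ℝ))

/-- The Erdős–Rényi measure `G(n,p)`: each unordered pair of vertices is (independently)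
labelled `true` with probability `p`. -/
def erMeasure (n : ℕ) (p : ℝ) (hp : p ≤ 1) : Measure (Sym2 (Fin n) → Bool) :=
  Measure.pi fun _ =>
    (PMF.bernoulli (Real.toNNReal p) (by simpa using hp)).toMeasure

end

lemma bern_integral (p : ℝ) (hp0 : 0 ≤ p) (h : Real.toNNReal p ≤ 1) (f : Bool → ℝ) :
    ∫ b, f b ∂((PMF.bernoulli (Real.toNNReal p) h).toMeasure)
      = p * f true + (1 - p) * f false := by
  have hp1 : p ≤ 1 := by simpa using h
  rw [PMF.integral_eq_sum, Fintype.sum_bool, PMF.bernoulli_apply, PMF.bernoulli_apply]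
  simp only [cond_true, cond_false, smul_eq_mul]
  simp only [ENNReal.coe_toReal, NNReal.coe_sub h, Real.coe_toNNReal _ hp0, NNReal.coe_one]

lemma deg_as_sum (n : ℕ) (ω : Sym2 (Fin n) → Bool) (v : Fin n) :
    (((graphOf n ω).degree v : ℝ)) =
      ∑ w ∈ Finset.univ.erase v, (if ω s(v, w) then (1 : ℝ) else 0) := by
  have hnb : (graphOf n ω).neighborFinset v
      = (Finset.univ.erase v).filter (fun w => ω s(v, w) = true) := by
    ext w
    simp only [SimpleGraph.mem_neighborFinset, Finset.mem_filter, Finset.mem_erase,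
      Finset.mem_univ, and_true, true_and]
    show (v ≠ w ∧ ω s(v, w) = true) ↔ (w ≠ v ∧ ω s(v, w) = true)
    rw [ne_comm]
  rw [SimpleGraph.degree, hnb, Finset.sum_boole]

lemma chernoff (p : ℝ) (hp0 : 0 < p) (hp1 : p < 1) (n : ℕ) (v : Fin n) :
    erMeasure n p hp1.le {ω | ((graphOf n ω).degree v : ℝ) < ((n - 1 : ℕ) : ℝ) * p / 2}
      ≤ ENNReal.ofReal (((1 - p + p * Real.exp (-1)) * Real.exp (p / 2)) ^ (n - 1)) := by
  classical
  set a : ℝ := ((n - 1 : ℕ) : ℝ) * p / 2 with ha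
  set g0 : ℝ := 1 - p + p * Real.exp (-1) with hg0
  set μ := erMeasure n p hp1.le with hμ
  haveI : IsProbabilityMeasure μ := by
    rw [hμ, erMeasure]; infer_instance
  set f : (Sym2 (Fin n) → Bool) → ℝ := fun ω => Real.exp (a - ((graphOf n ω).degree v : ℝ))
    with hf
  set S : Finset (Sym2 (Fin n)) := (Finset.univ.erase v).image (fun w => s(v, w)) with hS
  have hinj : Set.InjOn (fun w => s(v, w)) (Finset.univ.erase v : Set (Fin n)) := by
    intro x hx y hy hxy
    simp only [Finset.coe_erase, Set.mem_diff, Set.mem_singleton_iff] at hx hy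
    rcases Sym2.eq_iff.mp hxy with ⟨-, h⟩ | ⟨h1, h2⟩
    · exact h
    · exact absurd h2 hx.2
  have hScard : S.card = n - 1 := by
    rw [hS, Finset.card_image_of_injOn hinj, Finset.card_erase_of_mem (Finset.mem_univ v),
      Finset.card_univ, Fintype.card_fin]
  set F : Sym2 (Fin n) → Bool → ℝ :=
    fun i b => if i ∈ S then (if b then Real.exp (-1) else 1) else 1 with hF
  -- rewrite f as a product
  have hfprod : ∀ ω, f ω = Real.exp a * ∏ i : Sym2 (Fin n), F i (ω i) := by
    intro ω
    have h1 : f ω = Real.exp a * Real.exp (-((graphOf n ω).degree v : ℝ)) := by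
      rw [hf, ← Real.exp_add]; ring_nf
    rw [h1]
    congr 1
    rw [deg_as_sum, ← Finset.sum_neg_distrib, Real.exp_sum]
    have h2 : ∀ w ∈ Finset.univ.erase v,
        Real.exp (-(if ω s(v, w) then (1:ℝ) else 0)) =
          (fun i => if ω i then Real.exp (-1) else 1) s(v, w) := by
      intro w _; by_cases h : ω s(v, w) <;> simp [h]
    rw [Finset.prod_congr rfl h2]
    calc ∏ w ∈ Finset.univ.erase v, (fun i => if ω i then Real.exp (-1) else 1) s(v, w)
        = ∏ i ∈ S, (fun i => if ω i then Real.exp (-1) else 1) i := by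
          rw [hS, Finset.prod_image
            (fun x hx y hy => hinj (Finset.mem_coe.mpr hx) (Finset.mem_coe.mpr hy))]
      _ = ∏ i ∈ S, F i (ω i) := Finset.prod_congr rfl (fun i hi => by simp [hF, hi])
      _ = ∏ i : Sym2 (Fin n), F i (ω i) :=
          Finset.prod_subset (Finset.subset_univ S) (fun i _ hi => by simp [hF, hi])
  -- integral of f
  letI : MeasureSpace Bool :=
    ⟨(PMF.bernoulli (Real.toNNReal p) (by simpa using hp1.le)).toMeasure⟩
  haveI : IsProbabilityMeasure (volume : Measure Bool) := PMF.toMeasure.isProbabilityMeasure _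
  have hvol : μ = (volume : Measure (Sym2 (Fin n) → Bool)) := rfl
  have hber : ∀ i : Sym2 (Fin n), ∫ b, F i b = if i ∈ S then p * Real.exp (-1) + (1 - p) else 1 := by
    intro i
    rw [show (volume : Measure Bool) = (PMF.bernoulli (Real.toNNReal p)
      (by simpa using hp1.le)).toMeasure from rfl]
    rw [bern_integral p hp0.le _ (F i)]
    by_cases h : i ∈ S <;> simp [hF, h]
  have hintf : ∫ ω, f ω ∂μ = Real.exp a * g0 ^ (n - 1) := by
    rw [hvol]
    calc (∫ ω, f ω)
        = ∫ ω : Sym2 (Fin n) → Bool, Real.exp a * ∏ i : Sym2 (Fin n), F i (ω i) := by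
          congr 1; ext ω; exact hfprod ω
      _ = Real.exp a * ∫ ω : Sym2 (Fin n) → Bool, ∏ i : Sym2 (Fin n), F i (ω i) :=
          integral_const_mul _ _
      _ = Real.exp a * ∏ i : Sym2 (Fin n), ∫ b, F i b := by
          exact congrArg _ (MeasureTheory.integral_fintype_prod_eq_prod (ι := Sym2 (Fin n)) F)
      _ = Real.exp a * g0 ^ (n - 1) := by
          congr 1
          rw [Finset.prod_congr rfl (fun i _ => hber i),
            Finset.prod_ite_mem Finset.univ S (fun _ => p * Real.exp (-1) + (1 - p)),
            Finset.univ_inter, Finset.prod_const, hScard, hg0]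
          congr 1
          ring
  -- Markov
  have hfnint : Integrable f μ := Integrable.of_finite
  have hfnn : 0 ≤ᵐ[μ] f := ae_of_all _ fun ω => (Real.exp_pos _).le
  have hmarkov := mul_meas_ge_le_integral_of_nonneg hfnn hfnint 1
  rw [one_mul] at hmarkov
  have hsub : {ω | ((graphOf n ω).degree v : ℝ) < a} ⊆ {ω | 1 ≤ f ω} := by
    intro ω hω
    simp only [Set.mem_setOf_eq] at hω ⊢
    rw [hf]
    have : 0 ≤ a - ((graphOf n ω).degree v : ℝ) := by linarith
    calc (1:ℝ) = Real.exp 0 := Real.exp_zero.symm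
      _ ≤ _ := Real.exp_le_exp.mpr this
  calc μ {ω | ((graphOf n ω).degree v : ℝ) < a} ≤ μ {ω | 1 ≤ f ω} := measure_mono hsub
    _ = ENNReal.ofReal (μ {ω | 1 ≤ f ω}).toReal := (ENNReal.ofReal_toReal (measure_ne_top _ _)).symm
    _ ≤ ENNReal.ofReal (∫ ω, f ω ∂μ) := ENNReal.ofReal_le_ofReal hmarkov
    _ ≤ ENNReal.ofReal ((g0 * Real.exp (p / 2)) ^ (n - 1)) := by
        apply ENNReal.ofReal_le_ofReal
        rw [hintf, mul_pow, ← Real.exp_nat_mul]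
        rw [ha]
        apply le_of_eq
        rw [mul_comm (Real.exp _)]
        congr 1
        push_cast [mul_div_assoc]
        ring

lemma detLemma (p : ℝ) (hp0 : 0 < p) (n : ℕ) (hn : 2 ≤ n) (ω : Sym2 (Fin n) → Bool)
    (hdeg : ∀ v : Fin n, ((n - 1 : ℕ) : ℝ) * p / 2 ≤ ((graphOf n ω).degree v : ℝ))
    (v : Fin n) :
    Real.sqrt (∑ w : Fin n,
        (transM (graphOf n ω) v w - statDist (graphOf n ω) w) ^ 2) ≤
      (4 / Real.sqrt p) / Real.sqrt n := by
  set G := graphOf n ω with hG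
  have hnR : (2 : ℝ) ≤ (n : ℝ) := by exact_mod_cast hn
  have hnpos : (0 : ℝ) < n := by linarith
  have hcast : ((n - 1 : ℕ) : ℝ) = (n : ℝ) - 1 := by
    rw [Nat.cast_sub (by omega)]; norm_num
  have hhalf : (n : ℝ) / 2 ≤ ((n - 1 : ℕ) : ℝ) := by rw [hcast]; linarith
  have hq : ∀ u : Fin n, (n : ℝ) * p / 4 ≤ (G.degree u : ℝ) := by
    intro u
    have := hdeg u
    nlinarith [hdeg u, hhalf, hp0]
  have hnp : (0 : ℝ) < (n : ℝ) * p / 4 := by positivity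
  have hdpos : ∀ u : Fin n, (0 : ℝ) < (G.degree u : ℝ) := fun u => lt_of_lt_of_le hnp (hq u)
  -- degree sum
  have hsum : ∑ u : Fin n, (G.degree u : ℝ) = 2 * (G.edgeFinset.card : ℝ) := by
    exact_mod_cast congrArg (Nat.cast : ℕ → ℝ) (SimpleGraph.sum_degrees_eq_twice_card_edges G)
  set D : ℝ := 2 * (G.edgeFinset.card : ℝ) with hD
  clear_value D
  have hDge : (n : ℝ) * ((n : ℝ) * p / 4) ≤ D := by
    rw [← hsum]
    calc (n:ℝ) * ((n:ℝ)*p/4) = ∑ _u : Fin n, ((n:ℝ)*p/4) := by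
          rw [Finset.sum_const, Finset.card_univ, Fintype.card_fin, nsmul_eq_mul]
      _ ≤ ∑ u : Fin n, (G.degree u : ℝ) := Finset.sum_le_sum fun u _ => hq u
  have hDpos : 0 < D := lt_of_lt_of_le (by positivity) hDge
  have hdegle : ∀ u : Fin n, (G.degree u : ℝ) ≤ (n : ℝ) := by
    intro u
    have h2 : G.degree u < Fintype.card (Fin n) := G.degree_lt_card_verts u
    rw [Fintype.card_fin] at h2
    exact_mod_cast h2.le
  -- sum of transM squared
  have htsum : ∑ w : Fin n, (transM G v w) ^ 2 = ((G.degree v : ℝ))⁻¹ := by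
    have : ∀ w : Fin n, (transM G v w)^2 = if G.Adj v w then ((G.degree v:ℝ))⁻¹^2 else 0 := by
      intro w; simp only [transM, Matrix.of_apply]; split <;> simp
    rw [Finset.sum_congr rfl fun w _ => this w]
    rw [← Finset.sum_filter, Finset.sum_const]
    have hfil : (Finset.univ.filter (G.Adj v)).card = G.degree v := by
      simp [SimpleGraph.degree, SimpleGraph.neighborFinset_eq_filter]
    rw [hfil, nsmul_eq_mul, sq]
    field_simp
  have hssum : ∑ w : Fin n, (statDist G w) ^ 2 ≤ 4 / ((n:ℝ) * p) := by
    have h1 : ∑ w : Fin n, (statDist G w) ^ 2 ≤ ∑ w : Fin n, (n:ℝ) * (G.degree w : ℝ) / D^2 := by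
      apply Finset.sum_le_sum
      intro w _
      have : statDist G w ^ 2 = (G.degree w:ℝ)^2 / D^2 := by
        rw [statDist, ← hD, div_pow]
      rw [this]
      gcongr
      nlinarith [hdegle w, Nat.cast_nonneg (α := ℝ) (G.degree w)]
    have h2 : ∑ w : Fin n, (n:ℝ) * (G.degree w : ℝ) / D^2 = (n:ℝ) * D / D^2 := by
      rw [← Finset.sum_div, ← Finset.mul_sum, hsum]
    have h3 : (n:ℝ) * D / D^2 = (n:ℝ) / D := by
      field_simp
    have h4 : (n:ℝ) / D ≤ 4 / ((n:ℝ)*p) := by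
      rw [div_le_div_iff₀ hDpos (by positivity)]
      nlinarith [hDge]
    calc ∑ w : Fin n, (statDist G w) ^ 2 ≤ (n:ℝ)*D/D^2 := h1.trans_eq h2
      _ = (n:ℝ)/D := h3
      _ ≤ 4 / ((n:ℝ)*p) := h4
  have hinv : ((G.degree v : ℝ))⁻¹ ≤ 4 / ((n:ℝ)*p) := by
    rw [inv_eq_one_div, div_le_div_iff₀ (hdpos v) (by positivity)]
    nlinarith [hq v]
  have hmain : ∑ w : Fin n, (transM G v w - statDist G w)^2 ≤ 16 / ((n:ℝ)*p) := by
    have hpt : ∀ w : Fin n, (transM G v w - statDist G w)^2 ≤ 2 * (transM G v w)^2 + 2 * (statDist G w)^2 := by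
      intro w; nlinarith [sq_nonneg (transM G v w + statDist G w)]
    calc ∑ w : Fin n, (transM G v w - statDist G w)^2
        ≤ ∑ w : Fin n, (2 * (transM G v w)^2 + 2*(statDist G w)^2) :=
          Finset.sum_le_sum fun w _ => hpt w
      _ = 2 * ((G.degree v:ℝ))⁻¹ + 2 * ∑ w : Fin n, (statDist G w)^2 := by
          rw [Finset.sum_add_distrib, ← Finset.mul_sum, ← Finset.mul_sum, htsum]
      _ ≤ 2 * (4/((n:ℝ)*p)) + 2 * (4/((n:ℝ)*p)) := by
          gcongr
      _ = 16 / ((n:ℝ)*p) := by ring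
  have hsq : (4 / Real.sqrt p / Real.sqrt n)^2 = 16 / ((n:ℝ)*p) := by
    rw [div_pow, div_pow, Real.sq_sqrt hp0.le, Real.sq_sqrt hnpos.le]
    norm_num
    ring
  calc Real.sqrt (∑ w : Fin n, (transM G v w - statDist G w)^2)
      ≤ Real.sqrt ((4 / Real.sqrt p / Real.sqrt n)^2) := by
        apply Real.sqrt_le_sqrt; rw [hsq]; exact hmain
    _ = 4 / Real.sqrt p / Real.sqrt n := Real.sqrt_sq (by positivity)

lemma r_bounds (p : ℝ) (hp0 : 0 < p) (hp1 : p < 1) :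
    0 ≤ (1 - p + p * Real.exp (-1)) * Real.exp (p / 2) ∧
      (1 - p + p * Real.exp (-1)) * Real.exp (p / 2) < 1 := by
  have he : Real.exp (-1) < 1 / 2 := by
    rw [Real.exp_neg]
    rw [inv_lt_comm₀ (Real.exp_pos 1) (by norm_num)]
    calc (1/2 : ℝ)⁻¹ = 2 := by norm_num
      _ < Real.exp 1 := by
        have := Real.exp_one_gt_d9
        linarith
  have hg0 : 0 ≤ 1 - p + p * Real.exp (-1) := by
    have : 0 ≤ p * Real.exp (-1) := by positivity
    linarith
  refine ⟨by positivity, ?_⟩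
  have h1 : 1 - p + p * Real.exp (-1) ≤ Real.exp (p * (Real.exp (-1) - 1)) := by
    have := Real.add_one_le_exp (p * (Real.exp (-1) - 1))
    calc 1 - p + p * Real.exp (-1) = p * (Real.exp (-1) - 1) + 1 := by ring
      _ ≤ Real.exp (p * (Real.exp (-1) - 1)) := this
  calc (1 - p + p * Real.exp (-1)) * Real.exp (p / 2)
      ≤ Real.exp (p * (Real.exp (-1) - 1)) * Real.exp (p / 2) := by
        apply mul_le_mul_of_nonneg_right h1 (Real.exp_pos _).le
    _ = Real.exp (p * (Real.exp (-1) - 1) + p / 2) := (Real.exp_add _ _).symm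
    _ < 1 := by
        have hlt : p * (Real.exp (-1) - 1) + p / 2 < 0 := by nlinarith
        calc Real.exp (p * (Real.exp (-1) - 1) + p / 2) < Real.exp 0 :=
              Real.exp_lt_exp.mpr hlt
          _ = 1 := Real.exp_zero

/-- For fixed `0 < p < 1`, with probability tending to `1` as `n → ∞`, for every vertex
`v` the distribution `μ₁` of the simple random walk started at `v` after one step
satisfies `‖μ₁ − π‖_{ℓ²} ≤ C_p/√n`. -/
theorem statement16 (p : ℝ) (hp0 : 0 < p) (hp1 : p < 1) :
    ∃ C : ℝ, 0 < C ∧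
      Tendsto (fun n : ℕ =>
        erMeasure n p hp1.le
          {ω | ∀ v : Fin n,
            Real.sqrt (∑ w : Fin n,
                (transM (graphOf n ω) v w - statDist (graphOf n ω) w) ^ 2) ≤
              C / Real.sqrt n})
        atTop (nhds 1) := by
  classical
  obtain ⟨hr0, hr1⟩ := r_bounds p hp0 hp1
  set r : ℝ := (1 - p + p * Real.exp (-1)) * Real.exp (p / 2) with hr
  refine ⟨4 / Real.sqrt p, by positivity, ?_⟩
  set good : (n : ℕ) → Set (Sym2 (Fin n) → Bool) := fun n =>
    {ω | ∀ v : Fin n,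
      Real.sqrt (∑ w : Fin n,
          (transM (graphOf n ω) v w - statDist (graphOf n ω) w) ^ 2) ≤
        (4 / Real.sqrt p) / Real.sqrt n} with hgood
  show Tendsto (fun n : ℕ => erMeasure n p hp1.le (good n)) atTop (nhds 1)
  have hmeas : ∀ n, MeasurableSet (good n) := fun n => (Set.toFinite _).measurableSet
  haveI : ∀ n, IsProbabilityMeasure (erMeasure n p hp1.le) := fun n => by
    rw [erMeasure]; infer_instance
  -- complement bound
  have key : ∀ n : ℕ, 2 ≤ n →
      erMeasure n p hp1.le (good n)ᶜ ≤ ENNReal.ofReal ((n : ℝ) * r ^ (n - 1)) := by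
    intro n hn
    have hsub : (good n)ᶜ ⊆
        ⋃ v : Fin n, {ω | ((graphOf n ω).degree v : ℝ) < ((n - 1 : ℕ) : ℝ) * p / 2} := by
      intro ω hω
      by_contra hc
      simp only [Set.mem_iUnion, Set.mem_setOf_eq, not_exists, not_lt] at hc
      exact hω (fun v => detLemma p hp0 n hn ω hc v)
    calc erMeasure n p hp1.le (good n)ᶜ
        ≤ erMeasure n p hp1.le
            (⋃ v : Fin n, {ω | ((graphOf n ω).degree v : ℝ) < ((n - 1 : ℕ) : ℝ) * p / 2}) :=
          measure_mono hsub
      _ ≤ ∑' v : Fin n, erMeasure n p hp1.le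
            {ω | ((graphOf n ω).degree v : ℝ) < ((n - 1 : ℕ) : ℝ) * p / 2} :=
          measure_iUnion_le _
      _ ≤ ∑' _v : Fin n, ENNReal.ofReal (r ^ (n - 1)) := by
          apply ENNReal.tsum_le_tsum
          intro v
          exact chernoff p hp0 hp1 n v
      _ = (n : ENNReal) * ENNReal.ofReal (r ^ (n - 1)) := by
          rw [tsum_fintype, Finset.sum_const, Finset.card_univ, Fintype.card_fin, nsmul_eq_mul]
      _ = ENNReal.ofReal ((n : ℝ) * r ^ (n - 1)) := by
          rw [ENNReal.ofReal_mul (by positivity), ENNReal.ofReal_natCast]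
  -- the complement tends to zero
  have hup : Tendsto (fun n : ℕ => ENNReal.ofReal ((n : ℝ) * r ^ (n - 1))) atTop (nhds 0) := by
    have hnorm : ‖r‖ < 1 := by rwa [Real.norm_eq_abs, abs_of_nonneg hr0]
    have h1 : Tendsto (fun m : ℕ => ((m : ℝ) + 1) * r ^ m) atTop (nhds 0) := by
      have ha := (summable_pow_mul_geometric_of_norm_lt_one 1 hnorm).tendsto_atTop_zero
      have hb := tendsto_pow_atTop_nhds_zero_of_lt_one hr0 hr1
      have := ha.add hb
      rw [add_zero] at this
      refine this.congr (fun m => ?_)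
      simp [pow_one]
      ring
    have h2 : Tendsto (fun n : ℕ => (((n - 1 : ℕ) : ℝ) + 1) * r ^ (n - 1)) atTop (nhds 0) :=
      h1.comp (tendsto_sub_atTop_nat 1)
    have h3 : Tendsto (fun n : ℕ => (n : ℝ) * r ^ (n - 1)) atTop (nhds 0) := by
      refine h2.congr' ?_
      filter_upwards [eventually_ge_atTop 1] with n hn
      congr 1
      rw [Nat.cast_sub hn]
      norm_num
    have := ENNReal.tendsto_ofReal h3
    simpa using this
  have hcompl : Tendsto (fun n : ℕ => erMeasure n p hp1.le (good n)ᶜ) atTop (nhds 0) := by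
    apply tendsto_of_tendsto_of_tendsto_of_le_of_le' tendsto_const_nhds hup
    · exact Eventually.of_forall (fun n => zero_le)
    · filter_upwards [eventually_ge_atTop 2] with n hn
      exact key n hn
  have heq : ∀ n : ℕ, erMeasure n p hp1.le (good n)
      = 1 - erMeasure n p hp1.le (good n)ᶜ := by
    intro n
    have := prob_compl_eq_one_sub (μ := erMeasure n p hp1.le) (hmeas n).compl
    rw [compl_compl] at this
    exact this
  have : Tendsto (fun n : ℕ => 1 - erMeasure n p hp1.le (good n)ᶜ) atTop (nhds 1) := by
    have := ENNReal.Tendsto.sub (tendsto_const_nhds (x := (1 : ENNReal))) hcompl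
      (Or.inl ENNReal.one_ne_top)
    simpa using this
  exact Tendsto.congr (fun n => (heq n).symm) this
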